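/- Let (α₁,α₂,α₃) ∈ ℂ³ be strongly non-resonant. Let a ∈ ℂ with a ≠ 0, and let f, g, h ∈ ℂ⟦t⟧ be formal power series with f of order at least two (its coefficients in degrees 0 and 1 vanish) and g, h with zero constant term. Suppose there exists Φ ∈ ℂ⟦t⟧ such that Φ·(a + f′) = α₁·(a·t + f), Φ·g′ = α₂·g and Φ·h′ = α₃·h, where ′ denotes the formal derivative (this is the condition that the parametrized formal curve γ(t) = (a·t + f(t), g(t), h(t)) is invariant by the diagonal vector field X = α₁x₁∂₁ + α₂x₂∂₂ + α₃x₃∂₃). Then g = 0 and h = 0; hence every smooth formal separatrix of X is one of the three coordinate axes. -/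

import Mathlib

open PowerSeries

/-- A triple `(α₁, α₂, α₃) ∈ ℂ³` is strongly non-resonant if the only integers
`ℓ₁, ℓ₂, ℓ₃ ∈ ℤ` with `ℓ₁α₁ + ℓ₂α₂ + ℓ₃α₃ = 0` are `ℓ₁ = ℓ₂ = ℓ₃ = 0`. -/
def StronglyNonResonant (α₁ α₂ α₃ : ℂ) : Prop :=
  ∀ l₁ l₂ l₃ : ℤ, (l₁ : ℂ) * α₁ + (l₂ : ℂ) * α₂ + (l₃ : ℂ) * α₃ = 0 →
    l₁ = 0 ∧ l₂ = 0 ∧ l₃ = 0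

/-- If `Φ` has zero constant term and first coefficient `α`, and `Φ·u′ = β·u` with
`u(0)=0` and `u ≠ 0`, then `n·α = β` for some `n ≥ 1`. -/
lemma eigen_aux (α β : ℂ) (Φ u : PowerSeries ℂ)
    (hΦ0 : coeff 0 Φ = 0) (hΦ1 : coeff 1 Φ = α)
    (hu0 : constantCoeff u = 0) (hne : u ≠ 0)
    (heq : Φ * d⁄dX ℂ u = C β * u) :
    ∃ n : ℕ, 1 ≤ n ∧ (n : ℂ) * α = β := by
  have hex : ∃ n, coeff n u ≠ 0 := by
    by_contra hc
    push_neg at hc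
    exact hne (PowerSeries.ext fun n => by simp [hc n])
  classical
  let n := Nat.find hex
  have hn : coeff n u ≠ 0 := Nat.find_spec hex
  have hmin : ∀ m < n, coeff m u = 0 := fun m hm => by
    by_contra hc; exact absurd (Nat.find_le hc) (not_le.mpr hm)
  have hn1 : 1 ≤ n := by
    rcases Nat.eq_zero_or_pos n with h0 | h0
    · exact absurd (h0 ▸ hn) (by simpa [PowerSeries.coeff_zero_eq_constantCoeff] using hu0)
    · exact h0
  refine ⟨n, hn1, ?_⟩
  have hc := congrArg (coeff n) heq
  rw [PowerSeries.coeff_mul, PowerSeries.coeff_C_mul] at hc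
  have hsum : ∑ p ∈ Finset.HasAntidiagonal.antidiagonal n, coeff p.1 Φ * coeff p.2 (d⁄dX ℂ u)
      = coeff 1 Φ * coeff (n - 1) (d⁄dX ℂ u) := by
    refine Finset.sum_eq_single (1, n - 1) ?_ ?_
    · rintro ⟨i, j⟩ hij hne'
      simp only [Finset.HasAntidiagonal.mem_antidiagonal] at hij
      rcases Nat.eq_zero_or_pos i with hi0 | hi0
      · subst hi0; simp [hΦ0]
      rcases Nat.lt_or_ge i 2 with hi2 | hi2
      · interval_cases i
        · exfalso; apply hne'; simp at hij ⊢; omega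
      · have : j + 1 < n := by omega
        rw [PowerSeries.coeff_derivative, hmin _ this, zero_mul, mul_zero]
    · intro hcon
      exfalso; apply hcon
      simp only [Finset.HasAntidiagonal.mem_antidiagonal]
      omega
  rw [hsum, hΦ1, PowerSeries.coeff_derivative] at hc
  have hcast : ((n - 1 : ℕ) : ℂ) + 1 = (n : ℂ) := by
    rw [Nat.cast_sub hn1]; ring
  rw [hcast, Nat.sub_add_cancel hn1] at hc
  have : ((n : ℂ) * α - β) * coeff n u = 0 := by linear_combination hc
  rcases mul_eq_zero.mp this with h | h
  · exact sub_eq_zero.mp h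
  · exact absurd h hn

theorem smooth_separatrix_is_coordinate_axis (α₁ α₂ α₃ : ℂ)
    (hres : StronglyNonResonant α₁ α₂ α₃)
    (a : ℂ) (ha : a ≠ 0) (f g h : PowerSeries ℂ)
    (hf0 : coeff 0 f = 0) (hf1 : coeff 1 f = 0)
    (hg0 : constantCoeff g = 0) (hh0 : constantCoeff h = 0)
    (Φ : PowerSeries ℂ)
    (hinv1 : Φ * (C a + d⁄dX ℂ f) = C α₁ * (C a * X + f))
    (hinv2 : Φ * d⁄dX ℂ g = C α₂ * g)
    (hinv3 : Φ * d⁄dX ℂ h = C α₃ * h) :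
    g = 0 ∧ h = 0 := by
  -- compute Φ₀ = 0
  have hc0 := congrArg (coeff 0) hinv1
  simp [PowerSeries.coeff_mul, PowerSeries.coeff_derivative, hf0, hf1] at hc0
  have hΦ0 : coeff 0 Φ = 0 := by
    rw [PowerSeries.coeff_zero_eq_constantCoeff]
    rcases hc0 with h' | h'
    · exact h'
    · exact absurd h' ha
  have hc1 := congrArg (coeff 1) hinv1
  rw [PowerSeries.coeff_mul, Finset.Nat.sum_antidiagonal_eq_sum_range_succ_mk] at hc1
  simp [Finset.sum_range_succ, PowerSeries.coeff_derivative, hf0, hf1, hΦ0] at hc1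
  have hΦ1 : coeff 1 Φ = α₁ := by
    exact hc1.resolve_right ha
  constructor
  · by_contra hne
    obtain ⟨n, hn1, hn⟩ := eigen_aux α₁ α₂ Φ g hΦ0 hΦ1 hg0 hne hinv2
    have := (hres n (-1) 0 (by push_cast; linear_combination hn)).2.1
    norm_num at this
  · by_contra hne
    obtain ⟨n, hn1, hn⟩ := eigen_aux α₁ α₃ Φ h hΦ0 hΦ1 hh0 hne hinv3
    have := (hres n 0 (-1) (by push_cast; linear_combination hn)).2.2
    norm_num at this
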